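/- Let C ≥ 0, R₀ > 0 and m₀ ∈ ℝ, and let (a_k)_{k≥0} be a sequence of complex numbers with a₀ ≠ 0 and |a_k| ≤ C·R₀^k·k!/(k+1)^{m₀} for all k. Then there exist a sequence (b_k)_{k≥0} of complex numbers and constants C' ≥ 0, R' > 0, m' ∈ ℝ such that ∑_{i=0}^k a_i·b_{k-i} equals 1 if k = 0 and equals 0 for every k ≥ 1, and such that |b_k| ≤ C'·R'^k·k!/(k+1)^{m'} for all k ≥ 0. -/

import Mathlib

/-- The Cauchy-product inverse sequence. -/
noncomputable def invSeq (a : ℕ → ℂ) : ℕ → ℂ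
  | 0 => (a 0)⁻¹
  | (k+1) => -(a 0)⁻¹ * ∑ i ∈ Finset.range (k+1), a (i+1) * invSeq a (k - i)
  termination_by k => k
  decreasing_by omega

/-- An analytic symbol sequence with nonvanishing leading term is invertible for the
Cauchy product, with inverse an analytic symbol sequence. -/
theorem analytic_symbol_inverse
    (C R₀ m₀ : ℝ) (hC : 0 ≤ C) (hR₀ : 0 < R₀) (a : ℕ → ℂ) (ha0 : a 0 ≠ 0)
    (ha : ∀ k : ℕ, ‖a k‖ ≤ C * R₀ ^ k * (Nat.factorial k) / ((k : ℝ) + 1) ^ m₀) :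
    ∃ b : ℕ → ℂ, ∃ C' : ℝ, 0 ≤ C' ∧ ∃ R' : ℝ, 0 < R' ∧ ∃ m' : ℝ,
      ((∑ i ∈ Finset.range 1, a i * b (0 - i)) = 1) ∧
      (∀ k : ℕ, 1 ≤ k → (∑ i ∈ Finset.range (k + 1), a i * b (k - i)) = 0) ∧
      (∀ k : ℕ, ‖b k‖ ≤ C' * R' ^ k * (Nat.factorial k) / ((k : ℝ) + 1) ^ m') := by
  classical
  set b := invSeq a with hbdef
  set A := (‖a 0‖)⁻¹ with hAdef
  have hA : 0 < A := by
    rw [hAdef]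
    exact inv_pos.mpr (norm_pos_iff.mpr ha0)
  set D := C + 1 with hDdef
  have hD : 0 < D := by simp [hDdef]; linarith
  set p := max 0 (-m₀) with hpdef
  have hp : 0 ≤ p := le_max_left _ _
  set R := R₀ * Real.exp p with hRdef
  have hR : 0 < R := mul_pos hR₀ (Real.exp_pos p)
  set Q := R * (1 + A * D) with hQdef
  have h1AD : 0 < 1 + A * D := by positivity
  have hQ : 0 < Q := mul_pos hR h1AD
  have hRltQ : R < Q := by
    have := mul_pos hR (mul_pos hA hD)
    rw [hQdef]
    nlinarith
  -- bound on a with natural powers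
  have haD : ∀ k : ℕ, ‖a k‖ ≤ D * R ^ k * (Nat.factorial k) := by
    intro k
    have hk1 : (1:ℝ) ≤ (k:ℝ) + 1 := by
      have : (0:ℝ) ≤ (k:ℝ) := Nat.cast_nonneg k
      linarith
    have h1 : ((k:ℝ) + 1) ^ (-m₀) ≤ (Real.exp p) ^ k := by
      calc ((k:ℝ) + 1) ^ (-m₀) ≤ ((k:ℝ) + 1) ^ p :=
            Real.rpow_le_rpow_of_exponent_le hk1 (le_max_right _ _)
        _ ≤ (Real.exp (k:ℝ)) ^ p := Real.rpow_le_rpow (by linarith) (Real.add_one_le_exp _) hp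
        _ = Real.exp ((k:ℝ) * p) := by rw [← Real.exp_mul]
        _ = (Real.exp p) ^ k := by rw [← Real.exp_nat_mul, mul_comm]
    have h2 : C * R₀ ^ k * (Nat.factorial k) / ((k:ℝ) + 1) ^ m₀
        = C * R₀ ^ k * (Nat.factorial k) * ((k:ℝ) + 1) ^ (-m₀) := by
      rw [Real.rpow_neg (by linarith), div_eq_mul_inv]
    calc ‖a k‖ ≤ C * R₀ ^ k * (Nat.factorial k) / ((k:ℝ) + 1) ^ m₀ := ha k
      _ = C * R₀ ^ k * (Nat.factorial k) * ((k:ℝ) + 1) ^ (-m₀) := h2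
      _ ≤ C * R₀ ^ k * (Nat.factorial k) * (Real.exp p) ^ k := by
          apply mul_le_mul_of_nonneg_left h1
          positivity
      _ = C * R ^ k * (Nat.factorial k) := by
          rw [show R ^ k = R₀ ^ k * (Real.exp p) ^ k from by rw [hRdef, mul_pow]]
          ring
      _ ≤ D * R ^ k * (Nat.factorial k) := by
          have : C ≤ D := by rw [hDdef]; linarith
          have h0 : (0:ℝ) ≤ R ^ k * (Nat.factorial k) := by positivity
          nlinarith [h0]
  -- geometric facts
  set r := R / Q with hrdef
  have hr0 : 0 < r := div_pos hR hQ
  have hr1 : r < 1 := (div_lt_one hQ).mpr hRltQ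
  have hrADeq : r * (1 + A * D) = 1 := by
    rw [hrdef, hQdef]
    field_simp
  have hgeo : ∀ n : ℕ, ∑ i ∈ Finset.range n, r ^ i ≤ 1 / (1 - r) := by
    intro n
    rw [geom_sum_eq (ne_of_lt hr1)]
    have h1r : 0 < 1 - r := by linarith
    have hrn : 0 ≤ r ^ n := by positivity
    have heq : (r ^ n - 1) / (r - 1) = (1 - r ^ n) / (1 - r) := by
      rw [div_eq_div_iff (by linarith) (by linarith)]
      ring
    rw [heq]
    exact (div_le_div_iff_of_pos_right h1r).mpr (by linarith)
  -- key bound by strong induction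
  have key : ∀ k : ℕ, ‖b k‖ ≤ A * Q ^ k * (Nat.factorial k) := by
    intro k
    induction k using Nat.strong_induction_on with
    | _ k ih =>
      match k with
      | 0 =>
        have : b 0 = (a 0)⁻¹ := by rw [hbdef, invSeq]
        rw [this, norm_inv]
        simp [hAdef]
      | (n+1) =>
        have hb1 : b (n+1) = -(a 0)⁻¹ * ∑ i ∈ Finset.range (n+1), a (i+1) * b (n - i) := by
          rw [hbdef, invSeq]
        rw [hb1, norm_mul, norm_neg, norm_inv, ← hAdef]
        have hsum : ‖∑ i ∈ Finset.range (n+1), a (i+1) * b (n - i)‖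
            ≤ ∑ i ∈ Finset.range (n+1), (A * D * (Nat.factorial (n+1))) * (Q ^ (n+1) * r ^ (i+1)) := by
          refine le_trans (norm_sum_le _ _) (Finset.sum_le_sum ?_)
          intro i hi
          rw [Finset.mem_range] at hi
          have hin : i ≤ n := Nat.lt_succ_iff.mp hi
          have hai := haD (i+1)
          have hbi := ih (n - i) (by omega)
          have hfacle : ((Nat.factorial (i+1) : ℝ)) * (Nat.factorial (n - i)) ≤ (Nat.factorial (n+1)) := by
            have hd : Nat.factorial (i+1) * Nat.factorial ((n+1) - (i+1)) ∣ Nat.factorial (n+1) :=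
              Nat.factorial_mul_factorial_dvd_factorial (by omega)
            have : (i+1) + (n - i) = n + 1 := by omega
            have hle := Nat.le_of_dvd (Nat.factorial_pos _) hd
            have heq : (n+1) - (i+1) = n - i := by omega
            rw [heq] at hle
            exact_mod_cast hle
          have hQ0 : Q ≠ 0 := ne_of_gt hQ
          have hpow : R ^ (i+1) * Q ^ (n - i) = Q ^ (n+1) * r ^ (i+1) := by
            have hsplit : Q ^ (n+1) = Q ^ (i+1) * Q ^ (n - i) := by
              rw [← pow_add]; congr 1; omega
            rw [hsplit, hrdef, div_pow]
            field_simp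
          calc ‖a (i+1) * b (n - i)‖
              = ‖a (i+1)‖ * ‖b (n - i)‖ := norm_mul _ _
            _ ≤ (D * R ^ (i+1) * (Nat.factorial (i+1))) * (A * Q ^ (n - i) * (Nat.factorial (n - i))) := by
                apply mul_le_mul hai hbi (norm_nonneg _)
                positivity
            _ = (A * D) * ((Nat.factorial (i+1) : ℝ) * (Nat.factorial (n - i))) * (R ^ (i+1) * Q ^ (n - i)) := by
                ring
            _ ≤ (A * D) * (Nat.factorial (n+1)) * (R ^ (i+1) * Q ^ (n - i)) := by
                have h0 : (0:ℝ) ≤ R ^ (i+1) * Q ^ (n - i) := by positivity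
                have hAD : (0:ℝ) ≤ A * D := by positivity
                have h1 := mul_le_mul_of_nonneg_right hfacle h0
                have h2 := mul_le_mul_of_nonneg_left h1 hAD
                linarith [h2]
            _ = (A * D * (Nat.factorial (n+1))) * (Q ^ (n+1) * r ^ (i+1)) := by
                rw [hpow]
        have hsum2 : ∑ i ∈ Finset.range (n+1), (A * D * (Nat.factorial (n+1))) * (Q ^ (n+1) * r ^ (i+1))
            ≤ A * D * (Nat.factorial (n+1)) * Q ^ (n+1) * (r / (1 - r)) := by
          have h1r : 0 < 1 - r := by linarith
          have hs : ∑ i ∈ Finset.range (n+1), r ^ (i+1) ≤ r / (1 - r) := by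
            have : ∑ i ∈ Finset.range (n+1), r ^ (i+1) = r * ∑ i ∈ Finset.range (n+1), r ^ i := by
              rw [Finset.mul_sum]
              exact Finset.sum_congr rfl fun i _ => by rw [pow_succ]; ring
            rw [this, div_eq_mul_one_div]
            exact mul_le_mul_of_nonneg_left (hgeo (n+1)) (le_of_lt hr0)
          calc ∑ i ∈ Finset.range (n+1), (A * D * (Nat.factorial (n+1))) * (Q ^ (n+1) * r ^ (i+1))
              = (A * D * (Nat.factorial (n+1)) * Q ^ (n+1)) * ∑ i ∈ Finset.range (n+1), r ^ (i+1) := by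
                rw [Finset.mul_sum]
                exact Finset.sum_congr rfl fun i _ => by ring
            _ ≤ A * D * (Nat.factorial (n+1)) * Q ^ (n+1) * (r / (1 - r)) := by
                apply mul_le_mul_of_nonneg_left hs
                positivity
        have hfinal : A * D * (Nat.factorial (n+1)) * Q ^ (n+1) * (r / (1 - r))
            = Q ^ (n+1) * (Nat.factorial (n+1)) := by
          have h1r : (1:ℝ) - r = A * D * r := by nlinarith [hrADeq]
          rw [h1r]
          have hADr : A * D * r ≠ 0 := by positivity
          field_simp
        calc A * ‖∑ i ∈ Finset.range (n+1), a (i+1) * b (n - i)‖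
            ≤ A * (∑ i ∈ Finset.range (n+1), (A * D * (Nat.factorial (n+1))) * (Q ^ (n+1) * r ^ (i+1))) :=
              mul_le_mul_of_nonneg_left hsum (le_of_lt hA)
          _ ≤ A * (A * D * (Nat.factorial (n+1)) * Q ^ (n+1) * (r / (1 - r))) :=
              mul_le_mul_of_nonneg_left hsum2 (le_of_lt hA)
          _ = A * (Q ^ (n+1) * (Nat.factorial (n+1))) := by rw [hfinal]
          _ = A * Q ^ (n+1) * (Nat.factorial (n+1)) := by ring
  refine ⟨b, A, le_of_lt hA, Q, hQ, 0, ?_, ?_, ?_⟩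
  · -- k = 0 identity
    rw [Finset.sum_range_one]
    have : b 0 = (a 0)⁻¹ := by rw [hbdef, invSeq]
    simp [this, mul_inv_cancel₀ ha0]
  · -- k ≥ 1 identity
    intro k hk
    obtain ⟨n, rfl⟩ : ∃ n, k = n + 1 := ⟨k - 1, by omega⟩
    rw [Finset.sum_range_succ']
    have hb1 : b (n+1) = -(a 0)⁻¹ * ∑ i ∈ Finset.range (n+1), a (i+1) * b (n - i) := by
      rw [hbdef, invSeq]
    have heq : ∀ i ∈ Finset.range (n+1), a (i+1) * b (n + 1 - (i+1)) = a (i+1) * b (n - i) := by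
      intro i _
      have hni : n + 1 - (i + 1) = n - i := by omega
      rw [hni]
    rw [Finset.sum_congr rfl heq]
    simp only [Nat.sub_zero, hb1]
    field_simp
    ring
  · -- the bound
    intro k
    rw [Real.rpow_zero, div_one]
    exact key k
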